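/- ⟨η₁| z^h (a⁺)^j k^m w^h |η₁⟩ = z^j (-q;q)_j · (-q^{j+m+1} z w; q)_∞ / (q^m z w; q)_∞, where ⟨η₁| = Σ_{m≥0} ⟨m|/(q;q)_m, |η₁⟩ = Σ_{m≥0} |m⟩/(q;q)_m, and the pairing is ⟨m|m'⟩ = δ_{m,m'}(q²;q²)_m. -/

import Mathlib

open Complex

noncomputable section

/-- `a⁺|m⟩ = |m+1⟩`. -/
def aP : (ℕ → ℂ) → (ℕ → ℂ) := fun f n => if n = 0 then 0 else f (n - 1)

/-- `k|m⟩ = q^m|m⟩`. -/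
def kk (q : ℂ) : (ℕ → ℂ) → (ℕ → ℂ) := fun f n => q ^ n * f n

/-- `z^h|m⟩ = z^m|m⟩`. -/
def zh (z : ℂ) : (ℕ → ℂ) → (ℕ → ℂ) := fun f n => z ^ n * f n

/-- q-Pochhammer symbol `(x;q)_m` specialized: `qpoch x m = ∏_{j=1}^m (1 - x^j)`. -/
def qpoch (x : ℂ) (m : ℕ) : ℂ := ∏ j ∈ Finset.range m, (1 - x ^ (j + 1))

/-- `(-q;q)_j = ∏_{i=1}^j (1 + q^i)`. -/
def negqpoch (q : ℂ) (j : ℕ) : ℂ := ∏ i ∈ Finset.range j, (1 + q ^ (i + 1))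

/-- infinite q-Pochhammer symbol `(x;q)_∞ = ∏_{i≥0} (1 - x q^i)`. -/
def qpochInf (x q : ℂ) : ℂ := ∏' i : ℕ, (1 - x * q ^ i)

/-- coefficients of `|η₁⟩ = Σ_{m≥0}|m⟩/(q;q)_m`. -/
def eta1 (q : ℂ) : ℕ → ℂ := fun m => (qpoch q m)⁻¹


namespace Stmt6Aux

open Filter Finset

/-- general q-Pochhammer `(a;q)_n`. -/
def poch (a q : ℂ) (n : ℕ) : ℂ := ∏ i ∈ Finset.range n, (1 - a * q ^ i)

lemma poch_zero (a q : ℂ) : poch a q 0 = 1 := rfl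

lemma poch_succ (a q : ℂ) (n : ℕ) : poch a q (n + 1) = poch a q n * (1 - a * q ^ n) :=
  Finset.prod_range_succ _ _

lemma norm_poch_le (a q : ℂ) (hq : ‖q‖ < 1) (n : ℕ) :
    ‖poch a q n‖ ≤ Real.exp (‖a‖ * (1 - ‖q‖)⁻¹) := by
  have h1 : (0:ℝ) < 1 - ‖q‖ := by linarith
  calc ‖poch a q n‖ = ∏ i ∈ Finset.range n, ‖(1:ℂ) - a * q ^ i‖ := norm_prod _ _
    _ ≤ ∏ i ∈ Finset.range n, Real.exp (‖a‖ * ‖q‖ ^ i) := by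
        apply Finset.prod_le_prod (fun i _ => norm_nonneg _)
        intro i _
        calc ‖(1:ℂ) - a * q ^ i‖ ≤ ‖(1:ℂ)‖ + ‖a * q ^ i‖ := norm_sub_le _ _
          _ = 1 + ‖a‖ * ‖q‖ ^ i := by simp [norm_mul, norm_pow]
          _ ≤ Real.exp (‖a‖ * ‖q‖ ^ i) := by
              have := Real.add_one_le_exp (‖a‖ * ‖q‖ ^ i); linarith
    _ = Real.exp (∑ i ∈ Finset.range n, ‖a‖ * ‖q‖ ^ i) := (Real.exp_sum _ _).symm
    _ ≤ Real.exp (‖a‖ * (1 - ‖q‖)⁻¹) := by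
        apply Real.exp_le_exp.2
        rw [← Finset.mul_sum]
        refine mul_le_mul_of_nonneg_left ?_ (norm_nonneg a)
        calc ∑ i ∈ Finset.range n, ‖q‖ ^ i ≤ ∑' i : ℕ, ‖q‖ ^ i :=
              Summable.sum_le_tsum _ (fun i _ => pow_nonneg (norm_nonneg q) i)
                (summable_geometric_of_lt_one (norm_nonneg q) hq)
          _ = (1 - ‖q‖)⁻¹ := tsum_geometric_of_lt_one (norm_nonneg q) hq

lemma le_norm_poch (q : ℂ) (hq : ‖q‖ < 1) (n : ℕ) :
    Real.exp (-(‖q‖ * ((1 - ‖q‖)⁻¹ * (1 - ‖q‖)⁻¹))) ≤ ‖poch q q n‖ := by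
  have h1 : (0:ℝ) < 1 - ‖q‖ := by linarith
  have key : ∀ i : ℕ, Real.exp (-(‖q‖ ^ (i + 1) * (1 - ‖q‖)⁻¹)) ≤ ‖(1:ℂ) - q * q ^ i‖ := by
    intro i
    set t : ℝ := ‖q‖ ^ (i + 1) with ht
    have ht0 : 0 ≤ t := pow_nonneg (norm_nonneg q) _
    have htq : t ≤ ‖q‖ := pow_le_of_le_one (norm_nonneg q) hq.le (Nat.succ_ne_zero i)
    have hlb : 1 - t ≤ ‖(1:ℂ) - q * q ^ i‖ := by
      have := norm_sub_norm_le (1:ℂ) (q * q ^ i)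
      have h2 : ‖q * q ^ i‖ = t := by
        rw [norm_mul, norm_pow, ht, pow_succ]; ring
      simp only [norm_one] at this
      linarith
    refine le_trans ?_ hlb
    set s : ℝ := t * (1 - ‖q‖)⁻¹ with hs
    have hs0 : 0 ≤ s := by positivity
    have he := Real.add_one_le_exp s
    have hts : t ≤ (1 - ‖q‖) * s := by
      rw [hs]; rw [mul_comm t, ← mul_assoc, mul_inv_cancel₀ h1.ne', one_mul]
    have hexp_pos := Real.exp_pos s
    rw [Real.exp_neg]
    rw [inv_le_iff_one_le_mul₀ hexp_pos]
    -- goal : 1 ≤ (1 - t) * Real.exp s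
    nlinarith [mul_le_mul_of_nonneg_left he (sub_nonneg.2 (le_trans htq hq.le))]
  calc Real.exp (-(‖q‖ * ((1 - ‖q‖)⁻¹ * (1 - ‖q‖)⁻¹)))
      ≤ Real.exp (-(∑ i ∈ Finset.range n, ‖q‖ ^ (i + 1) * (1 - ‖q‖)⁻¹)) := by
        apply Real.exp_le_exp.2
        rw [neg_le_neg_iff]
        calc ∑ i ∈ Finset.range n, ‖q‖ ^ (i + 1) * (1 - ‖q‖)⁻¹
            = (∑ i ∈ Finset.range n, ‖q‖ ^ (i + 1)) * (1 - ‖q‖)⁻¹ := by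
              rw [Finset.sum_mul]
          _ ≤ (‖q‖ * (1 - ‖q‖)⁻¹) * (1 - ‖q‖)⁻¹ := by
              refine mul_le_mul_of_nonneg_right ?_ (by positivity)
              have : ∀ i ∈ Finset.range n, ‖q‖ ^ (i + 1) = ‖q‖ * ‖q‖ ^ i := by
                intro i _; rw [pow_succ]; ring
              rw [Finset.sum_congr rfl this, ← Finset.mul_sum]
              refine mul_le_mul_of_nonneg_left ?_ (norm_nonneg q)
              calc ∑ i ∈ Finset.range n, ‖q‖ ^ i ≤ ∑' i : ℕ, ‖q‖ ^ i :=
                    Summable.sum_le_tsum _ (fun i _ => pow_nonneg (norm_nonneg q) i)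
                      (summable_geometric_of_lt_one (norm_nonneg q) hq)
                _ = (1 - ‖q‖)⁻¹ := tsum_geometric_of_lt_one (norm_nonneg q) hq
          _ = ‖q‖ * ((1 - ‖q‖)⁻¹ * (1 - ‖q‖)⁻¹) := by ring
    _ = ∏ i ∈ Finset.range n, Real.exp (-(‖q‖ ^ (i + 1) * (1 - ‖q‖)⁻¹)) := by
        rw [← Real.exp_sum, ← Finset.sum_neg_distrib]
    _ ≤ ∏ i ∈ Finset.range n, ‖(1:ℂ) - q * q ^ i‖ :=
        Finset.prod_le_prod (fun i _ => (Real.exp_pos _).le) (fun i _ => key i)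
    _ = ‖poch q q n‖ := (norm_prod _ _).symm


/-- uniform bound for the coefficients. -/
def Mbd (a q : ℂ) : ℝ :=
  Real.exp (‖a‖ * (1 - ‖q‖)⁻¹) * Real.exp (‖q‖ * ((1 - ‖q‖)⁻¹ * (1 - ‖q‖)⁻¹))

lemma Mbd_pos (a q : ℂ) : 0 < Mbd a q := by rw [Mbd]; positivity

lemma coeff_bound (a q : ℂ) (hq : ‖q‖ < 1) (n : ℕ) :
    ‖poch a q n / poch q q n‖ ≤ Mbd a q := by
  rw [norm_div, Mbd]
  rw [div_le_iff₀ (lt_of_lt_of_le (Real.exp_pos _) (le_norm_poch q hq n))]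
  calc ‖poch a q n‖ ≤ Real.exp (‖a‖ * (1 - ‖q‖)⁻¹) := norm_poch_le a q hq n
    _ = Real.exp (‖a‖ * (1 - ‖q‖)⁻¹) * Real.exp (‖q‖ * ((1 - ‖q‖)⁻¹ * (1 - ‖q‖)⁻¹)) *
          Real.exp (-(‖q‖ * ((1 - ‖q‖)⁻¹ * (1 - ‖q‖)⁻¹))) := by
        rw [mul_assoc, ← Real.exp_add]; simp
    _ ≤ Real.exp (‖a‖ * (1 - ‖q‖)⁻¹) * Real.exp (‖q‖ * ((1 - ‖q‖)⁻¹ * (1 - ‖q‖)⁻¹)) *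
          ‖poch q q n‖ := by
        refine mul_le_mul_of_nonneg_left (le_norm_poch q hq n) (by positivity)

lemma summable_coeff (a q y : ℂ) (hq : ‖q‖ < 1) (hy : ‖y‖ < 1) :
    Summable (fun n : ℕ => poch a q n / poch q q n * y ^ n) := by
  refine Summable.of_norm_bounded (g := fun n => Mbd a q * ‖y‖ ^ n)
    ((summable_geometric_of_lt_one (norm_nonneg y) hy).mul_left _) (fun n => ?_)
  rw [norm_mul, norm_pow]
  exact mul_le_mul_of_nonneg_right (coeff_bound a q hq n) (by positivity)

/-- the q-hypergeometric sum. -/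
def S (a q y : ℂ) : ℂ := ∑' n : ℕ, poch a q n / poch q q n * y ^ n

lemma one_sub_q_pow_ne (q : ℂ) (hq : ‖q‖ < 1) (k : ℕ) : (1 : ℂ) - q * q ^ k ≠ 0 := by
  intro h
  have h2 : (1 : ℂ) = q * q ^ k := by linear_combination h
  have h3 : ‖q * q ^ k‖ < 1 := by
    rw [norm_mul, norm_pow]
    have := pow_le_one₀ (norm_nonneg q) hq.le (n := k)
    nlinarith [norm_nonneg q, pow_nonneg (norm_nonneg q) k]
  rw [← h2] at h3; simp at h3

lemma pochq_ne (q : ℂ) (hq : ‖q‖ < 1) (n : ℕ) : poch q q n ≠ 0 := by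
  rw [poch]
  exact Finset.prod_ne_zero_iff.2 fun k _ => one_sub_q_pow_ne q hq k

set_option maxHeartbeats 1000000 in
lemma coeff_rec (a q : ℂ) (hq : ‖q‖ < 1) (n : ℕ) :
    poch a q (n + 1) / poch q q (n + 1) * (1 - q * q ^ n)
      = poch a q n / poch q q n * (1 - a * q ^ n) := by
  rw [poch_succ, poch_succ]
  have h1 := pochq_ne q hq n
  have h2 := one_sub_q_pow_ne q hq n
  rw [div_mul_eq_mul_div, div_mul_eq_mul_div, div_eq_div_iff (mul_ne_zero h1 h2) h1]
  ring

set_option maxHeartbeats 1600000 in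
lemma step (a q x : ℂ) (hq : ‖q‖ < 1) (hx : ‖x‖ < 1) :
    (1 - x) * S a q x = (1 - a * x) * S a q (q * x) := by
  have hqx : ‖q * x‖ < 1 := by
    rw [norm_mul]
    nlinarith [norm_nonneg q, norm_nonneg x]
  set c : ℕ → ℂ := fun n => poch a q n / poch q q n with hc
  have hsx : Summable (fun n : ℕ => c n * x ^ n) := summable_coeff a q x hq hx
  have hsqx : Summable (fun n : ℕ => c n * (q * x) ^ n) := summable_coeff a q (q * x) hq hqx
  have hc0 : c 0 = 1 := by simp [hc, poch_zero]
  have hshift1 : Summable (fun n : ℕ => c (n + 1) * x ^ (n + 1)) :=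
    (summable_nat_add_iff 1).2 hsx
  have hshift2 : Summable (fun n : ℕ => c (n + 1) * (q * x) ^ (n + 1)) :=
    (summable_nat_add_iff 1).2 hsqx
  have hLHS : (1 - x) * S a q x = 1 + ∑' n : ℕ, (c (n + 1) - c n) * x ^ (n + 1) := by
    have e1 : S a q x = 1 + ∑' n : ℕ, c (n + 1) * x ^ (n + 1) := by
      rw [show S a q x = ∑' n : ℕ, c n * x ^ n from rfl, Summable.tsum_eq_zero_add hsx]
      simp [hc0]
    have e2 : x * S a q x = ∑' n : ℕ, c n * x ^ (n + 1) := by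
      rw [show S a q x = ∑' n : ℕ, c n * x ^ n from rfl, ← tsum_mul_left]
      exact tsum_congr fun n => by ring
    calc (1 - x) * S a q x = S a q x - x * S a q x := by ring
      _ = 1 + ∑' n : ℕ, c (n + 1) * x ^ (n + 1) - ∑' n : ℕ, c n * x ^ (n + 1) := by
          rw [e2, e1]
      _ = 1 + (∑' n : ℕ, c (n + 1) * x ^ (n + 1) - ∑' n : ℕ, c n * x ^ (n + 1)) := by ring
      _ = 1 + ∑' n : ℕ, (c (n + 1) - c n) * x ^ (n + 1) := by
          have hs2 : Summable (fun n : ℕ => c n * x ^ (n + 1)) :=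
            (hsx.mul_left x).congr fun n => by ring
          rw [← Summable.tsum_sub hshift1 hs2]
          congr 1
          exact tsum_congr fun n => by ring
  have hRHS : (1 - a * x) * S a q (q * x)
      = 1 + ∑' n : ℕ, (c (n + 1) * q ^ (n + 1) - a * c n * q ^ n) * x ^ (n + 1) := by
    have e1 : S a q (q * x) = 1 + ∑' n : ℕ, c (n + 1) * q ^ (n + 1) * x ^ (n + 1) := by
      rw [show S a q (q * x) = ∑' n : ℕ, c n * (q * x) ^ n from rfl, Summable.tsum_eq_zero_add hsqx]
      simp only [hc0, pow_zero, mul_one]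
      congr 1
      exact tsum_congr fun n => by rw [mul_pow]; ring
    have e2 : (a * x) * S a q (q * x) = ∑' n : ℕ, a * c n * q ^ n * x ^ (n + 1) := by
      rw [show S a q (q * x) = ∑' n : ℕ, c n * (q * x) ^ n from rfl, ← tsum_mul_left]
      exact tsum_congr fun n => by rw [mul_pow]; ring
    calc (1 - a * x) * S a q (q * x) = S a q (q * x) - (a * x) * S a q (q * x) := by ring
      _ = 1 + ∑' n : ℕ, c (n + 1) * q ^ (n + 1) * x ^ (n + 1)
            - ∑' n : ℕ, a * c n * q ^ n * x ^ (n + 1) := by rw [e2, e1]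
      _ = 1 + (∑' n : ℕ, c (n + 1) * q ^ (n + 1) * x ^ (n + 1)
            - ∑' n : ℕ, a * c n * q ^ n * x ^ (n + 1)) := by ring
      _ = 1 + ∑' n : ℕ, (c (n + 1) * q ^ (n + 1) - a * c n * q ^ n) * x ^ (n + 1) := by
          have hs3 : Summable (fun n : ℕ => c (n + 1) * q ^ (n + 1) * x ^ (n + 1)) :=
            hshift2.congr fun n => by rw [mul_pow]; ring
          have hs4 : Summable (fun n : ℕ => a * c n * q ^ n * x ^ (n + 1)) :=
            (hsqx.mul_left (a * x)).congr fun n => by rw [mul_pow]; ring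
          rw [← Summable.tsum_sub hs3 hs4]
          congr 1
          exact tsum_congr fun n => by ring
  rw [hLHS, hRHS]
  congr 1
  refine tsum_congr fun n => ?_
  have h := coeff_rec a q hq n
  simp only [hc]
  linear_combination x ^ (n + 1) * h


lemma iter (a q x : ℂ) (hq : ‖q‖ < 1) (hx : ‖x‖ < 1) (N : ℕ) :
    poch x q N * S a q x = poch (a * x) q N * S a q (q ^ N * x) := by
  induction N with
  | zero => simp [poch_zero]
  | succ N ih =>
    have hxN : ‖q ^ N * x‖ < 1 := by
      rw [norm_mul, norm_pow]
      have h1 : ‖q‖ ^ N ≤ 1 := pow_le_one₀ (norm_nonneg q) hq.le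
      nlinarith [pow_nonneg (norm_nonneg q) N, norm_nonneg x]
    have hstep := step a q (q ^ N * x) hq hxN
    rw [poch_succ, poch_succ]
    calc poch x q N * (1 - x * q ^ N) * S a q x
        = (1 - x * q ^ N) * (poch x q N * S a q x) := by ring
      _ = (1 - x * q ^ N) * (poch (a * x) q N * S a q (q ^ N * x)) := by rw [ih]
      _ = poch (a * x) q N * ((1 - q ^ N * x) * S a q (q ^ N * x)) := by ring
      _ = poch (a * x) q N * ((1 - a * (q ^ N * x)) * S a q (q * (q ^ N * x))) := by
          rw [hstep]
      _ = poch (a * x) q N * (1 - a * x * q ^ N) * S a q (q ^ (N + 1) * x) := by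
          rw [pow_succ]; ring_nf

lemma factor_ne (x q : ℂ) (hq : ‖q‖ < 1) (hx : ‖x‖ < 1) (i : ℕ) :
    (1 : ℂ) - x * q ^ i ≠ 0 := by
  intro h
  have h2 : (1 : ℂ) = x * q ^ i := by linear_combination h
  have h3 : ‖x * q ^ i‖ < 1 := by
    rw [norm_mul, norm_pow]
    have h1 : ‖q‖ ^ i ≤ 1 := pow_le_one₀ (norm_nonneg q) hq.le
    nlinarith [pow_nonneg (norm_nonneg q) i, norm_nonneg x]
  rw [← h2] at h3; simp at h3

lemma summable_log (x q : ℂ) (hq : ‖q‖ < 1) (hx : ‖x‖ < 1) :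
    Summable (fun i : ℕ => Complex.log (1 - x * q ^ i)) := by
  refine Summable.of_norm_bounded_eventually_nat (g := fun n => 3 / 2 * (‖x‖ * ‖q‖ ^ n)) ?_ ?_
  · exact ((summable_geometric_of_lt_one (norm_nonneg q) hq).mul_left ‖x‖).mul_left (3 / 2)
  · have htend : Filter.Tendsto (fun n : ℕ => ‖x‖ * ‖q‖ ^ n) Filter.atTop (nhds 0) := by
      simpa using (tendsto_pow_atTop_nhds_zero_of_lt_one (norm_nonneg q) hq).const_mul ‖x‖
    filter_upwards [htend.eventually_le_const (by norm_num : (0:ℝ) < 1/2)] with n hn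
    have h1 : ‖-(x * q ^ n)‖ ≤ 1 / 2 := by
      rw [norm_neg, norm_mul, norm_pow]; exact hn
    have h2 := Complex.norm_log_one_add_half_le_self h1
    rw [show (1 : ℂ) + -(x * q ^ n) = 1 - x * q ^ n by ring] at h2
    rw [norm_neg, norm_mul, norm_pow] at h2
    exact h2

lemma mult_and_ne (x q : ℂ) (hq : ‖q‖ < 1) (hx : ‖x‖ < 1) :
    Multipliable (fun i : ℕ => (1 : ℂ) - x * q ^ i) ∧ (∏' i : ℕ, ((1 : ℂ) - x * q ^ i)) ≠ 0 := by
  have hne : ∀ (_ : Unit) (i : ℕ), ((fun i (_ : Unit) => (1 : ℂ) - x * q ^ i) i ()) ≠ 0 :=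
    fun _ i => factor_ne x q hq hx i
  have hlog : ∀ _ : Unit, Summable (fun i : ℕ => Complex.log (1 - x * q ^ i)) :=
    fun _ => summable_log x q hq hx
  constructor
  · exact Complex.multipliable_of_summable_log (hlog ())
  · have := Complex.cexp_tsum_eq_tprod (f := fun i => (1 : ℂ) - x * q ^ i) (fun i => hne () i) (hlog ())
    have h2 := this
    rw [← h2]
    exact Complex.exp_ne_zero _

set_option maxHeartbeats 1000000 in
lemma S_sub_one_bound (a q y : ℂ) (hq : ‖q‖ < 1) (hy : ‖y‖ < 1) :
    ‖S a q y - 1‖ ≤ Mbd a q * (1 - ‖y‖)⁻¹ * ‖y‖ := by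
  have hs : Summable (fun n : ℕ => poch a q n / poch q q n * y ^ n) :=
    summable_coeff a q y hq hy
  have h0 : S a q y - 1 = ∑' n : ℕ, poch a q (n + 1) / poch q q (n + 1) * y ^ (n + 1) := by
    rw [S, Summable.tsum_eq_zero_add hs]
    simp [poch_zero]
  rw [h0]
  have hsh : Summable (fun n : ℕ => poch a q (n + 1) / poch q q (n + 1) * y ^ (n + 1)) :=
    (summable_nat_add_iff 1).2 hs
  calc ‖∑' n : ℕ, poch a q (n + 1) / poch q q (n + 1) * y ^ (n + 1)‖
      ≤ ∑' n : ℕ, ‖poch a q (n + 1) / poch q q (n + 1) * y ^ (n + 1)‖ :=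
        norm_tsum_le_tsum_norm hsh.norm
    _ ≤ ∑' n : ℕ, Mbd a q * ‖y‖ * ‖y‖ ^ n := by
        refine Summable.tsum_le_tsum (fun n => ?_) hsh.norm ?_
        · rw [norm_mul, norm_pow, pow_succ]
          calc ‖poch a q (n+1) / poch q q (n+1)‖ * (‖y‖ ^ n * ‖y‖)
              ≤ Mbd a q * (‖y‖ ^ n * ‖y‖) := by
                refine mul_le_mul_of_nonneg_right (coeff_bound a q hq (n+1)) (by positivity)
            _ = Mbd a q * ‖y‖ * ‖y‖ ^ n := by ring
        · exact (summable_geometric_of_lt_one (norm_nonneg y) hy).mul_left _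
    _ = Mbd a q * ‖y‖ * (1 - ‖y‖)⁻¹ := by
        rw [tsum_mul_left, tsum_geometric_of_lt_one (norm_nonneg y) hy]
    _ = Mbd a q * (1 - ‖y‖)⁻¹ * ‖y‖ := by ring

lemma tendsto_S_one (a q x : ℂ) (hq : ‖q‖ < 1) (hx : ‖x‖ < 1) :
    Filter.Tendsto (fun N : ℕ => S a q (q ^ N * x)) Filter.atTop (nhds 1) := by
  rw [tendsto_iff_norm_sub_tendsto_zero]
  have hb : ∀ N : ℕ, ‖S a q (q ^ N * x) - 1‖ ≤ Mbd a q * (1 - ‖x‖)⁻¹ * (‖q‖ ^ N * ‖x‖) := by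
    intro N
    have hxN : ‖q ^ N * x‖ ≤ ‖x‖ := by
      rw [norm_mul, norm_pow]
      have h1 : ‖q‖ ^ N ≤ 1 := pow_le_one₀ (norm_nonneg q) hq.le
      nlinarith [norm_nonneg x]
    have hxN' : ‖q ^ N * x‖ < 1 := lt_of_le_of_lt hxN hx
    calc ‖S a q (q ^ N * x) - 1‖ ≤ Mbd a q * (1 - ‖q ^ N * x‖)⁻¹ * ‖q ^ N * x‖ :=
          S_sub_one_bound a q (q ^ N * x) hq hxN'
      _ ≤ Mbd a q * (1 - ‖x‖)⁻¹ * (‖q‖ ^ N * ‖x‖) := by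
          have hxN2 : ‖q‖ ^ N * ‖x‖ ≤ ‖x‖ := by
            rw [← norm_pow, ← norm_mul]; exact hxN
          rw [norm_mul, norm_pow]
          refine mul_le_mul_of_nonneg_right ?_ (by positivity)
          refine mul_le_mul_of_nonneg_left ?_ (Mbd_pos a q).le
          exact inv_anti₀ (by linarith) (by linarith)
  have htend0 : Filter.Tendsto (fun N : ℕ => Mbd a q * (1 - ‖x‖)⁻¹ * (‖q‖ ^ N * ‖x‖))
      Filter.atTop (nhds 0) := by
    have h1 : Filter.Tendsto (fun N : ℕ => ‖q‖ ^ N) Filter.atTop (nhds 0) :=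
      tendsto_pow_atTop_nhds_zero_of_lt_one (norm_nonneg q) hq
    have h2 := ((h1.mul_const ‖x‖).const_mul (Mbd a q * (1 - ‖x‖)⁻¹))
    simpa using h2
  exact squeeze_zero (fun N => norm_nonneg _) hb htend0


/-- the q-binomial theorem. -/
lemma qbinom (a q x : ℂ) (hq : ‖q‖ < 1) (hx : ‖x‖ < 1) (hax : ‖a * x‖ < 1) :
    ∑' n : ℕ, poch a q n / poch q q n * x ^ n
      = (∏' i : ℕ, (1 - a * x * q ^ i)) / (∏' i : ℕ, (1 - x * q ^ i)) := by
  obtain ⟨hm1, hnz1⟩ := mult_and_ne x q hq hx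
  obtain ⟨hm2, hnz2⟩ := mult_and_ne (a * x) q hq hax
  have h1 : Filter.Tendsto (fun N : ℕ => poch x q N * S a q x) Filter.atTop
      (nhds ((∏' i : ℕ, (1 - x * q ^ i)) * S a q x)) :=
    hm1.hasProd.tendsto_prod_nat.mul_const _
  have h2 : Filter.Tendsto (fun N : ℕ => poch (a * x) q N * S a q (q ^ N * x)) Filter.atTop
      (nhds ((∏' i : ℕ, (1 - a * x * q ^ i)) * 1)) :=
    hm2.hasProd.tendsto_prod_nat.mul (tendsto_S_one a q x hq hx)
  have heq : (fun N : ℕ => poch x q N * S a q x)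
      = (fun N : ℕ => poch (a * x) q N * S a q (q ^ N * x)) :=
    funext fun N => iter a q x hq hx N
  rw [heq] at h1
  have hkey : (∏' i : ℕ, (1 - x * q ^ i)) * S a q x = (∏' i : ℕ, (1 - a * x * q ^ i)) * 1 :=
    tendsto_nhds_unique h1 h2
  rw [mul_one] at hkey
  rw [show (∑' n : ℕ, poch a q n / poch q q n * x ^ n) = S a q x from rfl]
  field_simp [hnz1]
  linear_combination hkey



lemma aP_iter (j : ℕ) (f : ℕ → ℂ) (n : ℕ) :
    aP^[j] f n = if n < j then 0 else f (n - j) := by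
  induction j generalizing n with
  | zero => simp
  | succ j ih =>
    rw [Function.iterate_succ_apply']
    cases n with
    | zero => simp [aP]
    | succ n =>
      simp only [aP, Nat.succ_ne_zero, if_false, Nat.add_sub_cancel, ih,
        Nat.succ_lt_succ_iff, Nat.succ_sub_succ]
      simp

lemma kk_iter (q : ℂ) (m : ℕ) (f : ℕ → ℂ) (n : ℕ) :
    (kk q)^[m] f n = (q ^ n) ^ m * f n := by
  induction m with
  | zero => simp
  | succ m ih =>
    rw [Function.iterate_succ_apply', kk, ih, pow_succ]
    ring

lemma qpoch_eq_poch (q : ℂ) (l : ℕ) : qpoch q l = poch q q l := by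
  refine Finset.prod_congr rfl fun i _ => ?_
  rw [pow_succ']

lemma qpoch_ne (q : ℂ) (hq : ‖q‖ < 1) (l : ℕ) : qpoch q l ≠ 0 := by
  rw [qpoch_eq_poch]; exact pochq_ne q hq l

lemma qpoch_sq (q : ℂ) (l : ℕ) : qpoch (q ^ 2) l = qpoch q l * negqpoch q l := by
  rw [qpoch, qpoch, negqpoch, ← Finset.prod_mul_distrib]
  refine Finset.prod_congr rfl fun i _ => ?_
  have h : (q ^ 2) ^ (i + 1) = (q ^ (i + 1)) ^ 2 := by
    rw [← pow_mul, ← pow_mul, mul_comm]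
  rw [h]
  ring

lemma negqpoch_add (q : ℂ) (j n : ℕ) :
    negqpoch q (j + n) = negqpoch q j * poch (-(q ^ (j + 1))) q n := by
  rw [negqpoch, Finset.prod_range_add, negqpoch, poch]
  congr 1
  refine Finset.prod_congr rfl fun i _ => ?_
  rw [show (1:ℂ) - -q ^ (j+1) * q ^ i = 1 + q ^ (j + 1) * q ^ i by ring, ← pow_add]
  congr 2
  omega


end Stmt6Aux


open Stmt6Aux in
set_option maxHeartbeats 1000000 in
/-- `⟨η₁| z^h (a⁺)^j k^m w^h |η₁⟩
  = z^j (-q;q)_j (-q^{j+m+1}zw;q)_∞ / (q^m zw;q)_∞`,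
where the pairing is `⟨m|m'⟩ = δ_{m,m'}(q²;q²)_m`. -/
theorem stmt6 (q z w : ℂ) (j m : ℕ) (hq : ‖q‖ < 1) (hzw : ‖z * w‖ < 1) :
    ∑' l : ℕ, eta1 q l * qpoch (q ^ 2) l *
        (zh z (aP^[j] ((kk q)^[m] (zh w (eta1 q))))) l
    = z ^ j * negqpoch q j *
        qpochInf (-(q ^ (j + m + 1)) * z * w) q / qpochInf (q ^ m * z * w) q := by
  set F := fun l : ℕ => eta1 q l * qpoch (q ^ 2) l *
      (zh z (aP^[j] ((kk q)^[m] (zh w (eta1 q))))) l with hF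
  have hFval : ∀ l : ℕ, F l = (qpoch q l)⁻¹ * qpoch (q ^ 2) l *
      (z ^ l * (if l < j then 0 else (q ^ (l - j)) ^ m * (w ^ (l - j) * (qpoch q (l - j))⁻¹))) := by
    intro l
    simp only [hF, eta1, zh, aP_iter]
    by_cases hl : l < j
    · simp [hl]
    · simp [hl, kk_iter, zh, eta1]
  have hsupp : Function.support F ⊆ Set.range (fun n : ℕ => n + j) := by
    intro l hl
    by_contra hr
    have hlj : l < j := by
      by_contra h
      exact hr ⟨l - j, by show l - j + j = l; omega⟩
    apply hl
    rw [hFval l, if_pos hlj]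
    ring
  rw [← Function.Injective.tsum_eq (add_left_injective j) hsupp]
  have hx : ‖q ^ m * z * w‖ < 1 := by
    rw [mul_assoc, norm_mul, norm_pow]
    nlinarith [pow_le_one₀ (norm_nonneg q) hq.le (n := m), pow_nonneg (norm_nonneg q) m,
      norm_nonneg (z * w)]
  have hax : ‖(-(q ^ (j + 1))) * (q ^ m * z * w)‖ < 1 := by
    rw [norm_mul, norm_neg, norm_pow]
    nlinarith [pow_le_one₀ (norm_nonneg q) hq.le (n := j + 1),
      pow_nonneg (norm_nonneg q) (j + 1), norm_nonneg (q ^ m * z * w)]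
  have hFn : ∀ n : ℕ, F (n + j) = z ^ j * negqpoch q j *
      (poch (-(q ^ (j + 1))) q n / poch q q n * (q ^ m * z * w) ^ n) := by
    intro n
    rw [hFval, if_neg (by omega), Nat.add_sub_cancel]
    rw [qpoch_sq, show n + j = j + n from Nat.add_comm n j, negqpoch_add, ← qpoch_eq_poch]
    have h1 := qpoch_ne q hq (j + n)
    have h2 := qpoch_ne q hq n
    field_simp
    ring
  calc ∑' n : ℕ, F (n + j)
      = ∑' n : ℕ, z ^ j * negqpoch q j *
          (poch (-(q ^ (j + 1))) q n / poch q q n * (q ^ m * z * w) ^ n) := tsum_congr hFn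
    _ = z ^ j * negqpoch q j *
          ∑' n : ℕ, poch (-(q ^ (j + 1))) q n / poch q q n * (q ^ m * z * w) ^ n :=
        tsum_mul_left
    _ = z ^ j * negqpoch q j *
          ((∏' i : ℕ, (1 - (-(q ^ (j + 1))) * (q ^ m * z * w) * q ^ i)) /
            (∏' i : ℕ, (1 - (q ^ m * z * w) * q ^ i))) := by
        rw [qbinom (-(q ^ (j + 1))) q (q ^ m * z * w) hq hx hax]
    _ = z ^ j * negqpoch q j *
        qpochInf (-(q ^ (j + m + 1)) * z * w) q / qpochInf (q ^ m * z * w) q := by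
        have hnum : (∏' i : ℕ, (1 - (-(q ^ (j + 1))) * (q ^ m * z * w) * q ^ i))
            = ∏' i : ℕ, (1 - -(q ^ (j + m + 1)) * z * w * q ^ i) :=
          tprod_congr fun i => by ring
        rw [qpochInf, qpochInf, ← hnum]
        ring
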